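/- Let n ≥ 1, let g : ℂⁿ → ℂ be a holomorphic function, and let x₀ ∈ ℂⁿ satisfy g(x₀) = 0. Fix s ∈ ℂⁿ. Then: (a) there is a neighbourhood V of x₀ such that for every x ∈ V with x ≠ x₀ and g(x) ≠ 0, one has g(x + g(x)²·s) ≠ 0; and (b) the function x ↦ 1/g(x) − 1/g(x + g(x)²·s) tends to Dg(x₀)(s) (the Fréchet derivative of g at x₀ applied to s) as x tends to x₀ within the set {x ∈ ℂⁿ : g(x) ≠ 0, g(x + g(x)²·s) ≠ 0}. -/

import Mathlib

open Filter Topology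


/-- Cauchy estimate: an entire function's derivative at `0` is bounded by its sup on the
unit circle. -/
lemma deriv_norm_le_of_entire (f : ℂ → ℂ) (hf : Differentiable ℂ f) {C : ℝ}
    (hC : ∀ θ : ℝ, ‖f (circleMap 0 1 θ)‖ ≤ C) : ‖deriv f 0‖ ≤ C := by
  have hp : HasFPowerSeriesAt f (cauchyPowerSeries f 0 1) 0 :=
    (hf.hasFPowerSeriesOnBall 0 (R := 1) one_pos).hasFPowerSeriesAt
  rw [hp.deriv]
  have h1 : ‖(cauchyPowerSeries f 0 1).coeff 1‖ ≤ ‖cauchyPowerSeries f 0 1 1‖ := by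
    simpa using (cauchyPowerSeries f 0 1 1).le_opNorm (fun _ => 1)
  have h2 := norm_cauchyPowerSeries_le f 0 1 1
  have hint : IntervalIntegrable (fun θ : ℝ => ‖f (circleMap 0 1 θ)‖) MeasureTheory.volume 0
      (2 * Real.pi) :=
    ((hf.continuous.comp (continuous_circleMap 0 1)).norm).intervalIntegrable _ _
  have h3 : (∫ θ : ℝ in (0)..2 * Real.pi, ‖f (circleMap 0 1 θ)‖) ≤ C * (2 * Real.pi) := by
    calc (∫ θ : ℝ in (0)..2 * Real.pi, ‖f (circleMap 0 1 θ)‖)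
        ≤ ∫ _ : ℝ in (0)..2 * Real.pi, C :=
          intervalIntegral.integral_mono_on Real.two_pi_pos.le hint
            (intervalIntegrable_const) (fun θ _ => hC θ)
      _ = C * (2 * Real.pi) := by simp [mul_comm]
  have hpi : (0:ℝ) < 2 * Real.pi := Real.two_pi_pos
  calc ‖(cauchyPowerSeries f 0 1).coeff 1‖ ≤ ‖cauchyPowerSeries f 0 1 1‖ := h1
    _ ≤ ((2 * Real.pi)⁻¹ * ∫ θ : ℝ in (0)..2 * Real.pi, ‖f (circleMap 0 1 θ)‖)
        * |(1:ℝ)|⁻¹ ^ 1 := by simpa using h2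
    _ ≤ (2 * Real.pi)⁻¹ * (C * (2 * Real.pi)) := by
        simp only [abs_one, inv_one, one_pow, mul_one]
        exact mul_le_mul_of_nonneg_left h3 (by positivity)
    _ = C := by field_simp


variable {n : ℕ}

lemma hasDerivAt_line (g : (Fin n → ℂ) → ℂ) (hg : Differentiable ℂ g)
    (z s : Fin n → ℂ) (τ : ℂ) :
    HasDerivAt (fun t : ℂ => g (z + t • s)) (fderiv ℂ g (z + τ • s) s) τ := by
  have h1 : HasDerivAt (fun t : ℂ => z + t • s) s τ := by
    simpa using ((hasDerivAt_id τ).smul_const s).const_add z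
  exact (hg (z + τ • s)).hasFDerivAt.comp_hasDerivAt τ h1

lemma fderiv_apply_tendsto (g : (Fin n → ℂ) → ℂ) (hg : Differentiable ℂ g)
    (x₀ s : Fin n → ℂ) :
    Tendsto (fun z => fderiv ℂ g z s) (𝓝 x₀) (𝓝 (fderiv ℂ g x₀ s)) := by
  rw [Metric.tendsto_nhds]
  intro ε hε
  have hcirc : IsCompact (Metric.sphere (0:ℂ) 1) := isCompact_sphere 0 1
  have key : ∀ᶠ z in 𝓝 x₀, ∀ t ∈ Metric.sphere (0:ℂ) 1,
      ‖g (z + t • s) - g (x₀ + t • s)‖ < ε / 2 := by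
    apply hcirc.eventually_forall_of_forall_eventually
    intro t _
    have hc : Continuous fun p : (Fin n → ℂ) × ℂ => ‖g (p.1 + p.2 • s) - g (x₀ + p.2 • s)‖ := by
      have hgc := hg.continuous; fun_prop
    have h0 : ‖g (x₀ + t • s) - g (x₀ + t • s)‖ < ε / 2 := by simpa using half_pos hε
    have := (hc.tendsto (x₀, t)).eventually (Filter.Tendsto.eventually_lt_const h0 tendsto_id)
    rw [nhds_prod_eq] at this
    simpa using (hc.continuousAt (x := (x₀, t))).eventually_lt continuousAt_const h0
  filter_upwards [key] with z hz
  set f : ℂ → ℂ := fun t => g (z + t • s) - g (x₀ + t • s) with hf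
  have hfd : Differentiable ℂ f := by
    intro τ
    exact ((hasDerivAt_line g hg z s τ).sub (hasDerivAt_line g hg x₀ s τ)).differentiableAt
  have hder : deriv f 0 = fderiv ℂ g z s - fderiv ℂ g x₀ s := by
    have := ((hasDerivAt_line g hg z s 0).sub (hasDerivAt_line g hg x₀ s 0)).deriv
    rw [zero_smul, add_zero, add_zero] at this
    exact this
  have hb : ‖deriv f 0‖ ≤ ε / 2 := by
    apply deriv_norm_le_of_entire f hfd
    intro θ
    exact (hz _ (circleMap_mem_sphere 0 one_pos.le θ)).le
  rw [dist_eq_norm]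
  calc ‖fderiv ℂ g z s - fderiv ℂ g x₀ s‖ = ‖deriv f 0‖ := by rw [hder]
    _ ≤ ε / 2 := hb
    _ < ε := half_lt_self hε
/-- Localisation lemma: for holomorphic `g : ℂⁿ → ℂ` with `g x₀ = 0` and fixed `s`,
(a) near `x₀`, `g (x + g(x)² s) ≠ 0` whenever `x ≠ x₀` and `g x ≠ 0`; and
(b) `1/g(x) − 1/g(x + g(x)² s) → Dg(x₀)(s)` as `x → x₀` within the set where both
denominators are nonzero. -/
theorem localisation_lemma (n : ℕ) (hn : 1 ≤ n)
    (g : (Fin n → ℂ) → ℂ) (hg : Differentiable ℂ g)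
    (x₀ : Fin n → ℂ) (hx₀ : g x₀ = 0) (s : Fin n → ℂ) :
    (∃ V ∈ 𝓝 x₀, ∀ x ∈ V, x ≠ x₀ → g x ≠ 0 → g (x + (g x) ^ 2 • s) ≠ 0) ∧
    Tendsto (fun x => 1 / g x - 1 / g (x + (g x) ^ 2 • s))
      (𝓝[{x | x ≠ x₀ ∧ g x ≠ 0 ∧ g (x + (g x) ^ 2 • s) ≠ 0}] x₀)
      (𝓝 (fderiv ℂ g x₀ s)) := by
  set L : ℂ := fderiv ℂ g x₀ s with hL
  set h : (Fin n → ℂ) → ℂ := fun x => (g (x + (g x) ^ 2 • s) - g x) / (g x) ^ 2 with hh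
  -- Step 1: h tends to L within {g ≠ 0}
  have hB : Tendsto h (𝓝[{x | g x ≠ 0}] x₀) (𝓝 L) := by
    rw [Metric.tendsto_nhdsWithin_nhds]
    intro ε hε
    -- derivative close to L on a ball
    obtain ⟨r, hr, hball⟩ : ∃ r > 0, ∀ z ∈ Metric.ball x₀ r, ‖fderiv ℂ g z s - L‖ < ε / 2 := by
      have := (fderiv_apply_tendsto g hg x₀ s).eventually
        (Metric.ball_mem_nhds L (half_pos hε))
      rw [Metric.eventually_nhds_iff_ball] at this
      obtain ⟨r, hr, hmem⟩ := this
      exact ⟨r, hr, fun z hz => by simpa [dist_eq_norm] using hmem z hz⟩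
    -- continuity: g x ^ 2 • s is small
    have hsm : Tendsto (fun x => ‖(g x) ^ 2 • s‖) (𝓝 x₀) (𝓝 0) := by
      have : Tendsto (fun x => (g x) ^ 2 • s) (𝓝 x₀) (𝓝 ((g x₀) ^ 2 • s)) := ((hg.continuous.pow 2).smul continuous_const).tendsto x₀
      rw [hx₀] at this
      simpa using this.norm
    obtain ⟨δ, hδ, hδs⟩ : ∃ δ > 0, ∀ x, dist x x₀ < δ → ‖(g x) ^ 2 • s‖ < r / 2 := by
      have := hsm.eventually (eventually_lt_nhds (show (0:ℝ) < r/2 by positivity))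
      rw [Metric.eventually_nhds_iff] at this
      obtain ⟨δ, hδ, hm⟩ := this
      exact ⟨δ, hδ, fun x hx => hm hx⟩
    refine ⟨min δ (r / 2), by positivity, ?_⟩
    intro x hx hdist
    have hdδ : dist x x₀ < δ := lt_of_lt_of_le hdist (min_le_left _ _)
    have hdr : dist x x₀ < r / 2 := lt_of_lt_of_le hdist (min_le_right _ _)
    have hs2 : ‖(g x) ^ 2 • s‖ < r / 2 := hδs x hdδ
    -- mean value estimate on the segment
    set τ₀ : ℂ := (g x) ^ 2 with hτ₀
    have hmem : ∀ τ ∈ Metric.closedBall (0:ℂ) ‖τ₀‖, x + τ • s ∈ Metric.ball x₀ r := by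
      intro τ hτ
      rw [Metric.mem_closedBall, dist_zero_right] at hτ
      rw [Metric.mem_ball, dist_eq_norm]
      calc ‖x + τ • s - x₀‖ ≤ ‖x - x₀‖ + ‖τ • s‖ := by
            simpa [add_sub_right_comm] using norm_add_le (x - x₀) (τ • s)
        _ < r / 2 + r / 2 := by
            apply add_lt_add_of_lt_of_le
            · rwa [dist_eq_norm] at hdr
            · calc ‖τ • s‖ = ‖τ‖ * ‖s‖ := norm_smul τ s
                _ ≤ ‖τ₀‖ * ‖s‖ := by
                    apply mul_le_mul_of_nonneg_right hτ (norm_nonneg s)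
                _ = ‖τ₀ • s‖ := (norm_smul τ₀ s).symm
                _ ≤ r / 2 := hs2.le
        _ = r := by ring
    set ψ : ℂ → ℂ := fun τ => g (x + τ • s) with hψ
    set φ : ℂ →L[ℂ] ℂ := L • ContinuousLinearMap.id ℂ ℂ with hφ
    have hψd : ∀ τ, DifferentiableAt ℂ ψ τ := fun τ =>
      (hasDerivAt_line g hg x s τ).differentiableAt
    have hbound : ∀ τ ∈ Metric.closedBall (0:ℂ) ‖τ₀‖, ‖fderiv ℂ ψ τ - φ‖ ≤ ε / 2 := by
      intro τ hτ
      have h1 : ‖(fderiv ℂ ψ τ - φ) 1‖ < ε / 2 := by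
        have hd : deriv ψ τ = fderiv ℂ g (x + τ • s) s := (hasDerivAt_line g hg x s τ).deriv
        have : (fderiv ℂ ψ τ - φ) 1 = fderiv ℂ g (x + τ • s) s - L := by
          simp [hφ, ← hd, fderiv_apply_one_eq_deriv]
        rw [this]
        exact hball _ (hmem τ hτ)
      refine ContinuousLinearMap.opNorm_le_bound _ (by positivity) ?_
      intro w
      have : (fderiv ℂ ψ τ - φ) w = w • (fderiv ℂ ψ τ - φ) 1 := by
        rw [← ContinuousLinearMap.map_smul]
        norm_num
      rw [this, norm_smul, mul_comm]
      exact mul_le_mul_of_nonneg_right h1.le (norm_nonneg w)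
    have hMVT := Convex.norm_image_sub_le_of_norm_fderiv_le' (f := ψ) (φ := φ)
      (fun τ _ => hψd τ) hbound (convex_closedBall (0:ℂ) ‖τ₀‖)
      (Metric.mem_closedBall_self (norm_nonneg τ₀))
      (by rw [Metric.mem_closedBall, dist_zero_right])
    -- unfold
    have hgx : g x ≠ 0 := hx
    have hτ₀ne : τ₀ ≠ 0 := pow_ne_zero 2 hgx
    have hkey : ‖g (x + τ₀ • s) - g x - L * τ₀‖ ≤ ε / 2 * ‖τ₀‖ := by
      have e1 : ψ τ₀ = g (x + τ₀ • s) := rfl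
      have e2 : ψ 0 = g x := by simp [hψ]
      have e3 : φ τ₀ = L * τ₀ := by simp [hφ]
      simpa [e1, e2, e3] using hMVT
    rw [dist_eq_norm]
    have : h x - L = (g (x + τ₀ • s) - g x - L * τ₀) / τ₀ := by
      have hhx : h x = (g (x + τ₀ • s) - g x) / τ₀ := rfl
      rw [hhx, eq_div_iff hτ₀ne, sub_mul, div_mul_cancel₀ _ hτ₀ne]
    have hnz : ‖τ₀‖ ≠ 0 := norm_ne_zero_iff.mpr hτ₀ne
    rw [this, norm_div]
    calc ‖g (x + τ₀ • s) - g x - L * τ₀‖ / ‖τ₀‖ ≤ ε / 2 * ‖τ₀‖ / ‖τ₀‖ :=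
          div_le_div_of_nonneg_right hkey (norm_nonneg _)
      _ = ε / 2 := by rw [mul_div_assoc, div_self hnz, mul_one]
      _ < ε := half_lt_self hε
  -- identity g(x+gx²s) = g x * (1 + g x * h x) on {g ≠ 0}
  have hid : ∀ x, g x ≠ 0 → g (x + (g x) ^ 2 • s) = g x * (1 + g x * h x) := by
    intro x hgx
    field_simp [hh]
    have hhx : h x = (g (x + (g x) ^ 2 • s) - g x) / (g x) ^ 2 := rfl
    rw [hhx, mul_add, mul_one, ← mul_assoc, ← pow_two, mul_comm (g x ^ 2), div_mul_cancel₀ _ (pow_ne_zero 2 hgx)]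
    ring
  have hgt : Tendsto g (𝓝[{x | g x ≠ 0}] x₀) (𝓝 0) := by
    have := (hg.continuous.tendsto x₀).mono_left
      (nhdsWithin_le_nhds (s := {x | g x ≠ 0}))
    rwa [hx₀] at this
  have hgh : Tendsto (fun x => g x * h x) (𝓝[{x | g x ≠ 0}] x₀) (𝓝 0) := by
    simpa using hgt.mul hB
  have hev : ∀ᶠ x in 𝓝[{x | g x ≠ 0}] x₀, 1 + g x * h x ≠ 0 := by
    filter_upwards [hgh.eventually (Metric.ball_mem_nhds (0:ℂ) one_pos)] with x hx
    intro hcontra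
    rw [dist_zero_right] at hx
    have hgh1 : g x * h x = -1 := by linear_combination hcontra
    rw [hgh1] at hx
    norm_num at hx
  have hane : ∀ᶠ x in 𝓝[{x | g x ≠ 0}] x₀, g (x + (g x) ^ 2 • s) ≠ 0 := by
    filter_upwards [hev, self_mem_nhdsWithin] with x h1 h2
    rw [hid x h2]
    exact mul_ne_zero h2 h1
  constructor
  · rw [eventually_nhdsWithin_iff] at hane
    exact ⟨_, hane, fun x hx _ hgx => hx hgx⟩
  · set S : Set (Fin n → ℂ) := {x | x ≠ x₀ ∧ g x ≠ 0 ∧ g (x + (g x) ^ 2 • s) ≠ 0} with hS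
    have hsub : S ⊆ {x | g x ≠ 0} := fun x hx => hx.2.1
    have hB' := hB.mono_left (nhdsWithin_mono _ hsub)
    have hgh' := hgh.mono_left (nhdsWithin_mono _ hsub)
    have hden : Tendsto (fun x => 1 + g x * h x) (𝓝[S] x₀) (𝓝 1) := by
      simpa using tendsto_const_nhds.add hgh'
    have hq : Tendsto (fun x => h x / (1 + g x * h x)) (𝓝[S] x₀) (𝓝 L) := by
      have := hB'.div hden one_ne_zero; rw [div_one] at this; exact this
    refine Tendsto.congr' ?_ hq
    filter_upwards [self_mem_nhdsWithin] with x hx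
    obtain ⟨hne, hgx, hgφ⟩ := hx
    have e := hid x hgx
    have h1 : 1 + g x * h x ≠ 0 := by
      intro h0
      rw [h0, mul_zero] at e
      exact hgφ e
    rw [e]
    rw [eq_sub_iff_add_eq, div_add_div _ _ h1 (mul_ne_zero hgx h1), div_eq_div_iff (mul_ne_zero h1 (mul_ne_zero hgx h1)) hgx]
    ring
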